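/- Define QBER(p) = 1 − (1 − 3p + 28p²/9 − 28p³/27)/(1 − 8p/3 + 28p²/9 − 32p³/27) for p ∈ [0,1]. Then QBER(p) < p for every p ∈ (0, 1/2), and QBER(1/2) = 1/2. (Hence the probability threshold of the single-qubit error-detection scheme using two noisy EPR pairs is p_th = 1/2.) -/
import Mathlib


/-- The qubit error ratio of the single-qubit error-detection scheme using two noisy EPR
pairs over quantum depolarizing channels with depolarizing probability `p`. -/
noncomputable def QBER (p : ℝ) : ℝ :=
  1 - (1 - 3*p + 28*p^2/9 - 28*p^3/27) / (1 - 8*p/3 + 28*p^2/9 - 32*p^3/27)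

/-- `QBER(p) < p` for every `p ∈ (0, 1/2)`, and `QBER(1/2) = 1/2`; hence the probability
threshold of the single-qubit error-detection scheme using two noisy EPR pairs is
`p_th = 1/2`. -/
theorem stmt6 :
    (∀ p ∈ Set.Ioo (0 : ℝ) (1/2), QBER p < p) ∧ QBER (1/2) = 1/2 := by
  constructor
  · rintro p ⟨hp0, hp1⟩
    have hD : 0 < 1 - 8*p/3 + 28*p^2/9 - 32*p^3/27 := by
      nlinarith [sq_nonneg p, sq_nonneg (1 - 2*p), sq_nonneg (p*(1-2*p))]
    have key : 1 - p < (1 - 3*p + 28*p^2/9 - 28*p^3/27) /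
        (1 - 8*p/3 + 28*p^2/9 - 32*p^3/27) := by
      rw [lt_div_iff₀ hD]
      nlinarith [mul_pos (mul_pos hp0 (by nlinarith : (0:ℝ) < 1 - 2*p))
        (by nlinarith [sq_nonneg p] : (0:ℝ) < 18 - 36*p + 16*p^2)]
    unfold QBER
    linarith
  · unfold QBER; norm_num
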